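/- Let φ : ℝ × ℝ → ℝ be continuous, supported in [0,3] × [0,3], satisfy the dilation equation with coefficients c i j supported on {0,...,3}², and suppose ∑_{i,j ∈ ℤ} c (a−2i) (b−2j) = 1 for every a, b ∈ ℤ, and ∫∫ φ = 1. Then ∑_{i,j ∈ ℤ} φ(x − i, y − j) = 1 for all (x, y) ∈ ℝ² (partition of unity). -/

import Mathlib

open MeasureTheory

theorem partition_of_unity (φ : ℝ × ℝ → ℝ) (c : ℤ → ℤ → ℝ)
    (hcont : Continuous φ)
    (hsuppφ : ∀ p : ℝ × ℝ, p ∉ Set.Icc (0 : ℝ) 3 ×ˢ Set.Icc (0 : ℝ) 3 → φ p = 0)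
    (hsuppc : ∀ i j : ℤ, i ∉ Finset.Icc (0 : ℤ) 3 ∨ j ∉ Finset.Icc (0 : ℤ) 3 → c i j = 0)
    (hdil : ∀ x y : ℝ, φ (x, y) =
      ∑ i ∈ Finset.Icc (0 : ℤ) 3, ∑ j ∈ Finset.Icc (0 : ℤ) 3,
        c i j * φ (2 * x - (i : ℝ), 2 * y - (j : ℝ)))
    (hparity : ∀ a b : ℤ, ∑ᶠ (i : ℤ) (j : ℤ), c (a - 2 * i) (b - 2 * j) = 1)
    (havg : ∫ p : ℝ × ℝ, φ p = 1) :
    ∀ x y : ℝ, ∑ᶠ (i : ℤ) (j : ℤ), φ (x - (i : ℝ), y - (j : ℝ)) = 1 := by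
  -- zero off support
  have hz : ∀ (u v : ℝ), u < 0 ∨ 3 < u ∨ v < 0 ∨ 3 < v → φ (u, v) = 0 := by
    intro u v h
    apply hsuppφ
    simp only [Set.mem_prod, Set.mem_Icc, not_and_or, not_le]
    tauto
  have hcoord : ∀ (x : ℝ) (i : ℤ), i ∉ Finset.Icc (⌊x⌋ - 3) ⌊x⌋ → x - i < 0 ∨ 3 < x - i := by
    intro x i h
    rw [Finset.mem_Icc, not_and_or, not_le, not_le] at h
    have h1 := Int.floor_le x
    have h2 := Int.lt_floor_add_one x
    rcases h with h | h
    · right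
      have : (i : ℝ) + 4 ≤ (⌊x⌋ : ℝ) := by exact_mod_cast (by omega : i + 4 ≤ ⌊x⌋)
      linarith
    · left
      have : (⌊x⌋ : ℝ) + 1 ≤ (i : ℝ) := by exact_mod_cast (by omega : ⌊x⌋ + 1 ≤ i)
      linarith
  have hwin : ∀ (x y : ℝ) (i j : ℤ),
      i ∉ Finset.Icc (⌊x⌋ - 3) ⌊x⌋ ∨ j ∉ Finset.Icc (⌊y⌋ - 3) ⌊y⌋ →
      φ (x - i, y - j) = 0 := by
    intro x y i j h
    apply hz
    rcases h with h | h
    · rcases hcoord x i h with h' | h'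
      · exact Or.inl h'
      · exact Or.inr (Or.inl h')
    · rcases hcoord y j h with h' | h'
      · exact Or.inr (Or.inr (Or.inl h'))
      · exact Or.inr (Or.inr (Or.inr h'))
  have hfin : ∀ (x y : ℝ) (s t : Finset ℤ),
      Finset.Icc (⌊x⌋ - 3) ⌊x⌋ ⊆ s → Finset.Icc (⌊y⌋ - 3) ⌊y⌋ ⊆ t →
      ∑ᶠ (i : ℤ) (j : ℤ), φ (x - i, y - j) = ∑ i ∈ s, ∑ j ∈ t, φ (x - i, y - j) := by
    intro x y s t hs ht
    have inner : ∀ i : ℤ, ∑ᶠ j : ℤ, φ (x - i, y - j) = ∑ j ∈ t, φ (x - i, y - j) := by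
      intro i
      apply finsum_eq_sum_of_support_subset
      intro j hj
      by_contra hjt
      exact Function.mem_support.mp hj (hwin x y i j (Or.inr fun hm => hjt (ht hm)))
    rw [finsum_congr inner]
    apply finsum_eq_sum_of_support_subset
    intro i hi
    by_contra his
    exact Function.mem_support.mp hi
      (Finset.sum_eq_zero fun j _ => hwin x y i j (Or.inl fun hm => his (hs hm)))
  -- floor doubling facts
  have hfl : ∀ x : ℝ, 2 * ⌊x⌋ ≤ ⌊2 * x⌋ ∧ ⌊2 * x⌋ ≤ 2 * ⌊x⌋ + 1 := by
    intro x
    have h1 := Int.floor_le x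
    have h2 := Int.lt_floor_add_one x
    constructor
    · apply Int.le_floor.mpr
      push_cast
      linarith
    · have h3 : (⌊2 * x⌋ : ℝ) ≤ 2 * x := Int.floor_le _
      have : (⌊2 * x⌋ : ℝ) < 2 * (⌊x⌋ : ℝ) + 2 := by linarith
      have h4 : ⌊2 * x⌋ < 2 * ⌊x⌋ + 2 := by exact_mod_cast this
      omega
  -- c vanishes when w outside the natural window
  have hcw : ∀ (x : ℝ) (v w : ℤ), v ∈ Finset.Icc (⌊2 * x⌋ - 3) ⌊2 * x⌋ →
      w ∉ Finset.Icc (⌊x⌋ - 3) ⌊x⌋ → v - 2 * w ∉ Finset.Icc (0 : ℤ) 3 := by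
    intro x v w hv hw
    obtain ⟨ha, hb⟩ := hfl x
    rw [Finset.mem_Icc] at hv ⊢
    rw [Finset.mem_Icc] at hw
    omega
  -- finite parity sum
  have hpar : ∀ (x y : ℝ) (v1 v2 : ℤ), v1 ∈ Finset.Icc (⌊2 * x⌋ - 3) ⌊2 * x⌋ →
      v2 ∈ Finset.Icc (⌊2 * y⌋ - 3) ⌊2 * y⌋ →
      ∑ w ∈ Finset.Icc (⌊x⌋ - 3) ⌊x⌋ ×ˢ Finset.Icc (⌊y⌋ - 3) ⌊y⌋,
        c (v1 - 2 * w.1) (v2 - 2 * w.2) = 1 := by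
    intro x y v1 v2 hv1 hv2
    rw [Finset.sum_product' (f := fun i j => c (v1 - 2 * i) (v2 - 2 * j))]
    rw [← hparity v1 v2]
    have inner : ∀ i : ℤ, ∑ᶠ j : ℤ, c (v1 - 2 * i) (v2 - 2 * j)
        = ∑ j ∈ Finset.Icc (⌊y⌋ - 3) ⌊y⌋, c (v1 - 2 * i) (v2 - 2 * j) := by
      intro i
      apply finsum_eq_sum_of_support_subset
      intro j hj
      by_contra hjt
      exact Function.mem_support.mp hj (hsuppc _ _ (Or.inr (hcw y v2 j hv2 hjt)))
    rw [finsum_congr inner]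
    symm
    apply finsum_eq_sum_of_support_subset
    intro i hi
    by_contra hit
    exact Function.mem_support.mp hi
      (Finset.sum_eq_zero fun j _ => hsuppc _ _ (Or.inl (hcw x v1 i hv1 hit)))
  -- self-similarity
  have hself : ∀ x y : ℝ, ∑ᶠ (i : ℤ) (j : ℤ), φ (x - i, y - j)
      = ∑ᶠ (i : ℤ) (j : ℤ), φ (2 * x - i, 2 * y - j) := by
    intro x y
    obtain ⟨hax, hbx⟩ := hfl x
    obtain ⟨hay, hby⟩ := hfl y
    set s := Finset.Icc (⌊x⌋ - 3) ⌊x⌋ with hs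
    set t := Finset.Icc (⌊y⌋ - 3) ⌊y⌋ with ht
    set A := Finset.Icc (2 * ⌊x⌋ - 6) (2 * ⌊x⌋ + 4) with hA
    set B := Finset.Icc (2 * ⌊y⌋ - 6) (2 * ⌊y⌋ + 4) with hB
    have hAsub : Finset.Icc (⌊2 * x⌋ - 3) ⌊2 * x⌋ ⊆ A := by
      intro a ha; rw [Finset.mem_Icc] at ha ⊢; omega
    have hBsub : Finset.Icc (⌊2 * y⌋ - 3) ⌊2 * y⌋ ⊆ B := by
      intro a ha; rw [Finset.mem_Icc] at ha ⊢; omega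
    rw [hfin x y s t (by rw [hs]) (by rw [ht]),
        hfin (2 * x) (2 * y) A B hAsub hBsub]
    rw [← Finset.sum_product' (f := fun i j : ℤ => φ (x - i, y - j)),
        ← Finset.sum_product' (f := fun i j : ℤ => φ (2 * x - i, 2 * y - j))]
    -- step 1 : dilation + reindexing, per w
    have step1 : ∀ w ∈ s ×ˢ t, φ (x - w.1, y - w.2)
        = ∑ v ∈ A ×ˢ B, c (v.1 - 2 * w.1) (v.2 - 2 * w.2) * φ (2 * x - v.1, 2 * y - v.2) := by
      intro w hw
      rw [Finset.mem_product, hs, ht, Finset.mem_Icc, Finset.mem_Icc] at hw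
      have hinj : ∀ kl ∈ Finset.Icc (0:ℤ) 3 ×ˢ Finset.Icc (0:ℤ) 3,
          ∀ kl' ∈ Finset.Icc (0:ℤ) 3 ×ˢ Finset.Icc (0:ℤ) 3,
          (2 * w.1 + kl.1, 2 * w.2 + kl.2) = ((2 * w.1 + kl'.1, 2 * w.2 + kl'.2) : ℤ × ℤ)
          → kl = kl' := by
        intro kl _ kl' _ h
        rw [Prod.mk.injEq] at h
        exact Prod.ext (by omega) (by omega)
      have himg : Finset.image (fun kl : ℤ × ℤ => (2 * w.1 + kl.1, 2 * w.2 + kl.2))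
          (Finset.Icc (0:ℤ) 3 ×ˢ Finset.Icc (0:ℤ) 3) ⊆ A ×ˢ B := by
        intro v hv
        rw [Finset.mem_image] at hv
        obtain ⟨kl, hkl, rfl⟩ := hv
        rw [Finset.mem_product, Finset.mem_Icc, Finset.mem_Icc] at hkl
        rw [Finset.mem_product, hA, hB, Finset.mem_Icc, Finset.mem_Icc]
        omega
      calc φ (x - w.1, y - w.2)
          = ∑ kl ∈ Finset.Icc (0:ℤ) 3 ×ˢ Finset.Icc (0:ℤ) 3,
              c kl.1 kl.2 * φ (2 * (x - w.1) - kl.1, 2 * (y - w.2) - kl.2) := by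
            rw [hdil (x - w.1) (y - w.2),
              ← Finset.sum_product' (f := fun k l : ℤ => c k l *
                φ (2 * (x - w.1) - k, 2 * (y - w.2) - l))]
        _ = ∑ kl ∈ Finset.Icc (0:ℤ) 3 ×ˢ Finset.Icc (0:ℤ) 3,
              (fun v : ℤ × ℤ => c (v.1 - 2 * w.1) (v.2 - 2 * w.2) *
                φ (2 * x - v.1, 2 * y - v.2)) ((2 * w.1 + kl.1, 2 * w.2 + kl.2) : ℤ × ℤ) := by
            apply Finset.sum_congr rfl
            intro kl hkl
            simp only []
            have e1 : (2 * w.1 + kl.1 : ℤ) - 2 * w.1 = kl.1 := by omega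
            have e2 : (2 * w.2 + kl.2 : ℤ) - 2 * w.2 = kl.2 := by omega
            rw [e1, e2]
            have e3 : ((2 * (x - w.1) - kl.1 : ℝ), (2 * (y - w.2) - kl.2 : ℝ))
                = ((2 * x - ((2 * w.1 + kl.1 : ℤ) : ℝ)), (2 * y - ((2 * w.2 + kl.2 : ℤ) : ℝ))) :=
              Prod.ext (by push_cast; ring) (by push_cast; ring)
            rw [e3]
        _ = ∑ v ∈ Finset.image (fun kl : ℤ × ℤ => (2 * w.1 + kl.1, 2 * w.2 + kl.2))
              (Finset.Icc (0:ℤ) 3 ×ˢ Finset.Icc (0:ℤ) 3),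
              c (v.1 - 2 * w.1) (v.2 - 2 * w.2) * φ (2 * x - v.1, 2 * y - v.2) :=
            (Finset.sum_image (f := fun v : ℤ × ℤ => c (v.1 - 2 * w.1) (v.2 - 2 * w.2) *
              φ (2 * x - v.1, 2 * y - v.2)) hinj).symm
        _ = ∑ v ∈ A ×ˢ B, c (v.1 - 2 * w.1) (v.2 - 2 * w.2) * φ (2 * x - v.1, 2 * y - v.2) := by
            apply Finset.sum_subset himg
            intro v hv hvim
            have : v.1 - 2 * w.1 ∉ Finset.Icc (0:ℤ) 3 ∨ v.2 - 2 * w.2 ∉ Finset.Icc (0:ℤ) 3 := by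
              by_contra hcon
              rw [not_or, not_not, not_not] at hcon
              apply hvim
              rw [Finset.mem_image]
              refine ⟨(v.1 - 2 * w.1, v.2 - 2 * w.2), ?_, ?_⟩
              · rw [Finset.mem_product]; exact hcon
              · rw [Prod.ext_iff]; constructor <;> simp <;> omega
            rw [hsuppc _ _ this, zero_mul]
    rw [Finset.sum_congr rfl step1, Finset.sum_comm]
    -- step 2 : collapse inner c-sum using parity
    apply Finset.sum_congr rfl
    intro v hv
    rw [← Finset.sum_mul]
    by_cases hφv : φ (2 * x - v.1, 2 * y - v.2) = 0
    · rw [hφv, mul_zero]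
    · have hv1 : v.1 ∈ Finset.Icc (⌊2 * x⌋ - 3) ⌊2 * x⌋ := by
        by_contra hc
        exact hφv (hwin (2 * x) (2 * y) v.1 v.2 (Or.inl hc))
      have hv2 : v.2 ∈ Finset.Icc (⌊2 * y⌋ - 3) ⌊2 * y⌋ := by
        by_contra hc
        exact hφv (hwin (2 * x) (2 * y) v.1 v.2 (Or.inr hc))
      rw [hpar x y v.1 v.2 hv1 hv2, one_mul]
  -- halving invariance
  have hhalf : ∀ x y : ℝ, ∑ᶠ (i : ℤ) (j : ℤ), φ (x / 2 - i, y / 2 - j)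
      = ∑ᶠ (i : ℤ) (j : ℤ), φ (x - i, y - j) := by
    intro x y
    have h := hself (x / 2) (y / 2)
    rw [show (2 : ℝ) * (x / 2) = x by ring, show (2 : ℝ) * (y / 2) = y by ring] at h
    exact h
  -- iterated
  have hiter : ∀ (n : ℕ) (x y : ℝ), ∑ᶠ (i : ℤ) (j : ℤ), φ (x / 2 ^ n - i, y / 2 ^ n - j)
      = ∑ᶠ (i : ℤ) (j : ℤ), φ (x - i, y - j) := by
    intro n
    induction n with
    | zero => intro x y; norm_num
    | succ n ih =>
      intro x y
      rw [show (2 : ℝ) ^ (n + 1) = 2 ^ n * 2 by ring]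
      rw [show x / (2 ^ n * 2) = (x / 2) / 2 ^ n by ring,
          show y / (2 ^ n * 2) = (y / 2) / 2 ^ n by ring]
      rw [ih (x / 2) (y / 2)]
      exact hhalf x y
  -- the continuous local representative
  set g : ℝ × ℝ → ℝ := fun p => ∑ i ∈ Finset.Icc (-4 : ℤ) 1, ∑ j ∈ Finset.Icc (-4 : ℤ) 1,
      φ (p.1 - i, p.2 - j) with hgdef
  have hgcont : Continuous g := by
    rw [hgdef]
    apply continuous_finset_sum
    intro i _
    apply continuous_finset_sum
    intro j _
    exact hcont.comp ((continuous_fst.sub continuous_const).prodMk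
      (continuous_snd.sub continuous_const))
  have hSg : ∀ u v : ℝ, |u| < 1 → |v| < 1 →
      ∑ᶠ (i : ℤ) (j : ℤ), φ (u - i, v - j) = g (u, v) := by
    intro u v hu hv
    rw [abs_lt] at hu hv
    have h1 : (-1 : ℤ) ≤ ⌊u⌋ := Int.le_floor.mpr (by push_cast; linarith)
    have h2 : ⌊u⌋ < 1 := Int.floor_lt.mpr (by push_cast; linarith)
    have h3 : (-1 : ℤ) ≤ ⌊v⌋ := Int.le_floor.mpr (by push_cast; linarith)
    have h4 : ⌊v⌋ < 1 := Int.floor_lt.mpr (by push_cast; linarith)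
    rw [hgdef]
    exact hfin u v _ _ (fun a ha => by rw [Finset.mem_Icc] at ha ⊢; omega)
      (fun a ha => by rw [Finset.mem_Icc] at ha ⊢; omega)
  -- constancy
  have htend : ∀ a : ℝ, Filter.Tendsto (fun n : ℕ => a / 2 ^ n) Filter.atTop (nhds 0) := by
    intro a
    have h := (tendsto_pow_atTop_nhds_zero_of_lt_one (by norm_num : (0:ℝ) ≤ 1/2)
      (by norm_num : (1:ℝ)/2 < 1)).const_mul a
    rw [mul_zero] at h
    refine h.congr fun n => ?_
    rw [div_pow, one_pow]
    ring
  have hconst : ∀ x y : ℝ, ∑ᶠ (i : ℤ) (j : ℤ), φ (x - i, y - j) = g (0, 0) := by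
    intro x y
    have h2 : Filter.Tendsto (fun n : ℕ => ((x / 2 ^ n : ℝ), (y / 2 ^ n : ℝ)))
        Filter.atTop (nhds ((0 : ℝ), (0 : ℝ))) := (htend x).prodMk_nhds (htend y)
    have h3 : Filter.Tendsto (fun n : ℕ => g (x / 2 ^ n, y / 2 ^ n))
        Filter.atTop (nhds (g (0, 0))) := (hgcont.tendsto _).comp h2
    have hx0 : Filter.Tendsto (fun n : ℕ => |x / 2 ^ n|) Filter.atTop (nhds 0) := by
      simpa using (htend x).abs
    have hy0 : Filter.Tendsto (fun n : ℕ => |y / 2 ^ n|) Filter.atTop (nhds 0) := by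
      simpa using (htend y).abs
    have hx1 : ∀ᶠ n : ℕ in Filter.atTop, |x / 2 ^ n| < 1 := hx0.eventually_lt_const one_pos
    have hy1 : ∀ᶠ n : ℕ in Filter.atTop, |y / 2 ^ n| < 1 := hy0.eventually_lt_const one_pos
    have h4 : ∀ᶠ n : ℕ in Filter.atTop,
        g (x / 2 ^ n, y / 2 ^ n) = ∑ᶠ (i : ℤ) (j : ℤ), φ (x - i, y - j) := by
      filter_upwards [hx1, hy1] with n hn1 hn2
      rw [← hSg _ _ hn1 hn2, hiter n x y]
    exact tendsto_nhds_unique tendsto_const_nhds (Filter.Tendsto.congr' h4 h3)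
  -- integrability
  have hφc : HasCompactSupport φ :=
    HasCompactSupport.intro (isCompact_Icc.prod isCompact_Icc) hsuppφ
  have hφint : Integrable φ := hcont.integrable_of_hasCompactSupport hφc
  have hsub : ∀ (p : ℝ × ℝ) (i j : ℤ), p - ((i : ℝ), (j : ℝ)) = (p.1 - i, p.2 - j) :=
    fun p i j => rfl
  have hint : ∀ i j : ℤ, Integrable (fun p : ℝ × ℝ => φ (p.1 - i, p.2 - j)) := by
    intro i j
    have h := hφint.comp_sub_right (((i : ℝ), (j : ℝ)))
    simpa only [hsub] using h
  set I3 := Finset.Icc (-3 : ℤ) 0 with hI3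
  set Q : Set (ℝ × ℝ) := Set.Ico (0 : ℝ) 1 ×ˢ Set.Ico (0 : ℝ) 1 with hQ
  have hQmeas : MeasurableSet Q := measurableSet_Ico.prod measurableSet_Ico
  have hQvol : volume Q = 1 := by
    rw [hQ, Measure.volume_eq_prod, Measure.prod_prod, Real.volume_Ico]
    norm_num
  have hQrep : Set.EqOn (fun _ : ℝ × ℝ => g (0, 0))
      (fun p : ℝ × ℝ => ∑ i ∈ I3, ∑ j ∈ I3, φ (p.1 - i, p.2 - j)) Q := by
    intro p hp
    rw [hQ, Set.mem_prod] at hp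
    have hf1 : ⌊p.1⌋ = 0 := Int.floor_eq_zero_iff.mpr hp.1
    have hf2 : ⌊p.2⌋ = 0 := Int.floor_eq_zero_iff.mpr hp.2
    simp only
    rw [← hconst p.1 p.2]
    apply hfin p.1 p.2
    · intro a ha
      rw [hf1] at ha
      rw [Finset.mem_Icc] at ha
      rw [hI3, Finset.mem_Icc]
      omega
    · intro a ha
      rw [hf2] at ha
      rw [Finset.mem_Icc] at ha
      rw [hI3, Finset.mem_Icc]
      omega
  have htrans : ∀ i j : ℤ, ∫ p in Q, φ (p.1 - i, p.2 - j)
      = ∫ p in (Set.Ico (-(i:ℝ)) (1 - i) ×ˢ Set.Ico (-(j:ℝ)) (1 - j)), φ p := by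
    intro i j
    have hQij : MeasurableSet (Set.Ico (-(i:ℝ)) (1 - i) ×ˢ Set.Ico (-(j:ℝ)) (1 - j)) :=
      measurableSet_Ico.prod measurableSet_Ico
    rw [← integral_indicator hQmeas, ← integral_indicator hQij]
    rw [← integral_sub_right_eq_self
      (fun p => (Set.Ico (-(i:ℝ)) (1 - i) ×ˢ Set.Ico (-(j:ℝ)) (1 - j)).indicator φ p)
      (((i : ℝ), (j : ℝ)))]
    congr 1
    funext p
    have hmem : p ∈ Q ↔ (p.1 - (i:ℝ), p.2 - (j:ℝ)) ∈
        (Set.Ico (-(i:ℝ)) (1 - i) ×ˢ Set.Ico (-(j:ℝ)) (1 - j)) := by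
      rw [hQ]
      simp only [Set.mem_prod, Set.mem_Ico]
      constructor
      · rintro ⟨⟨a, b⟩, d, e⟩
        exact ⟨⟨by linarith, by linarith⟩, by linarith, by linarith⟩
      · rintro ⟨⟨a, b⟩, d, e⟩
        exact ⟨⟨by linarith, by linarith⟩, by linarith, by linarith⟩
    by_cases hp : p ∈ Q
    · rw [Set.indicator_of_mem hp, hsub, Set.indicator_of_mem (hmem.mp hp)]
    · rw [Set.indicator_of_notMem hp, hsub, Set.indicator_of_notMem (fun hc => hp (hmem.mpr hc))]
  -- 1D tiling
  have hdisj : ∀ a b c' : ℝ, Disjoint (Set.Ico a b) (Set.Ico b c') := by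
    intro a b c'
    rw [Set.disjoint_left]
    rintro x ⟨_, h2⟩ ⟨h3, _⟩
    linarith
  have tile : ∀ (f : ℝ → ℝ) (u : ℝ), ∑ i ∈ I3, (Set.Ico (-(i:ℝ)) (1 - (i:ℝ))).indicator f u
      = (Set.Ico (0 : ℝ) 4).indicator f u := by
    intro f u
    have hadd : ∀ (A B : Set ℝ), Disjoint A B →
        A.indicator f u + B.indicator f u = (A ∪ B).indicator f u :=
      fun A B h => (congrFun (Set.indicator_union_of_disjoint h f) u).symm
    rw [hI3, show Finset.Icc (-3 : ℤ) 0 = {-3, -2, -1, 0} from by decide]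
    rw [Finset.sum_insert (by decide), Finset.sum_insert (by decide),
        Finset.sum_insert (by decide), Finset.sum_singleton]
    norm_num
    rw [hadd (Set.Ico 1 2) (Set.Ico 0 1) (hdisj 0 1 2).symm, Set.union_comm,
        Set.Ico_union_Ico_eq_Ico (by norm_num : (0:ℝ) ≤ 1) (by norm_num : (1:ℝ) ≤ 2)]
    rw [hadd (Set.Ico 2 3) (Set.Ico 0 2) (hdisj 0 2 3).symm, Set.union_comm,
        Set.Ico_union_Ico_eq_Ico (by norm_num : (0:ℝ) ≤ 2) (by norm_num : (2:ℝ) ≤ 3)]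
    rw [hadd (Set.Ico 3 4) (Set.Ico 0 3) (hdisj 0 3 4).symm, Set.union_comm,
        Set.Ico_union_Ico_eq_Ico (by norm_num : (0:ℝ) ≤ 3) (by norm_num : (3:ℝ) ≤ 4)]
  -- 2D tiling
  have hprod : ∀ (A B : Set ℝ) (q : ℝ × ℝ), (A ×ˢ B).indicator φ q
      = A.indicator (fun _ => B.indicator (fun _ => φ q) q.2) q.1 := by
    intro A B q
    by_cases h1 : q.1 ∈ A <;> by_cases h2 : q.2 ∈ B <;>
      simp [Set.indicator_apply, Set.mem_prod, h1, h2]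
  have tile2 : ∀ p : ℝ × ℝ, ∑ i ∈ I3, ∑ j ∈ I3,
      (Set.Ico (-(i:ℝ)) (1 - (i:ℝ)) ×ˢ Set.Ico (-(j:ℝ)) (1 - (j:ℝ))).indicator φ p
      = (Set.Ico (0:ℝ) 4 ×ˢ Set.Ico (0:ℝ) 4).indicator φ p := by
    intro p
    refine Eq.trans Finset.sum_comm ?_
    have hj : ∀ j : ℤ, ∑ i ∈ I3,
        (Set.Ico (-(i:ℝ)) (1 - (i:ℝ)) ×ˢ Set.Ico (-(j:ℝ)) (1 - (j:ℝ))).indicator φ p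
        = (Set.Ico (0:ℝ) 4).indicator
            (fun _ => (Set.Ico (-(j:ℝ)) (1 - (j:ℝ))).indicator (fun _ => φ p) p.2) p.1 := by
      intro j
      rw [Finset.sum_congr rfl (fun i _ => hprod _ _ p)]
      exact tile _ p.1
    refine Eq.trans (Finset.sum_congr rfl fun j _ => hj j) ?_
    rw [hprod]
    by_cases h1 : p.1 ∈ Set.Ico (0:ℝ) 4
    · simp only [Set.indicator_of_mem h1]
      exact tile (fun _ => φ p) p.2
    · simp only [Set.indicator_of_notMem h1]
      simp
  -- big square contains the support
  have hbig : ∫ p in (Set.Ico (0:ℝ) 4 ×ˢ Set.Ico (0:ℝ) 4), φ p = 1 := by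
    rw [← havg]
    apply setIntegral_eq_integral_of_forall_compl_eq_zero
    intro p hp
    rw [Set.mem_prod, not_and_or] at hp
    apply hz
    rcases hp with hp | hp <;> rw [Set.mem_Ico, not_and_or, not_le, not_lt] at hp
    · rcases hp with hp | hp
      · exact Or.inl hp
      · exact Or.inr (Or.inl (by linarith))
    · rcases hp with hp | hp
      · exact Or.inr (Or.inr (Or.inl hp))
      · exact Or.inr (Or.inr (Or.inr (by linarith)))
  -- final value computation
  have hval : g (0, 0) = 1 := by
    have e1 : g (0, 0) = ∫ p in Q, (fun _ : ℝ × ℝ => g (0, 0)) p := by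
      rw [setIntegral_const, measureReal_def, hQvol]
      simp
    have e2 : ∫ p in Q, (fun _ : ℝ × ℝ => g (0, 0)) p
        = ∫ p in Q, ∑ i ∈ I3, ∑ j ∈ I3, φ (p.1 - i, p.2 - j) :=
      setIntegral_congr_fun hQmeas hQrep
    have e3 : ∫ p in Q, ∑ i ∈ I3, ∑ j ∈ I3, φ (p.1 - i, p.2 - j)
        = ∑ i ∈ I3, ∑ j ∈ I3, ∫ p in Q, φ (p.1 - i, p.2 - j) := by
      rw [integral_finset_sum _
        (fun i _ => integrable_finset_sum _ (fun j _ => (hint i j).integrableOn))]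
      exact Finset.sum_congr rfl fun i _ =>
        integral_finset_sum _ (fun j _ => (hint i j).integrableOn)
    have e4 : ∑ i ∈ I3, ∑ j ∈ I3, ∫ p in Q, φ (p.1 - i, p.2 - j)
        = ∑ i ∈ I3, ∑ j ∈ I3, ∫ p, (Set.Ico (-(i:ℝ)) (1 - (i:ℝ)) ×ˢ
            Set.Ico (-(j:ℝ)) (1 - (j:ℝ))).indicator φ p := by
      apply Finset.sum_congr rfl
      intro i _
      apply Finset.sum_congr rfl
      intro j _
      rw [htrans i j, integral_indicator (measurableSet_Ico.prod measurableSet_Ico)]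
    have e5 : ∑ i ∈ I3, ∑ j ∈ I3, ∫ p, (Set.Ico (-(i:ℝ)) (1 - (i:ℝ)) ×ˢ
            Set.Ico (-(j:ℝ)) (1 - (j:ℝ))).indicator φ p
        = ∫ p, (Set.Ico (0:ℝ) 4 ×ˢ Set.Ico (0:ℝ) 4).indicator φ p := by
      have st1 : ∀ i : ℤ, ∑ j ∈ I3, ∫ p, (Set.Ico (-(i:ℝ)) (1 - (i:ℝ)) ×ˢ
            Set.Ico (-(j:ℝ)) (1 - (j:ℝ))).indicator φ p
          = ∫ p, ∑ j ∈ I3, (Set.Ico (-(i:ℝ)) (1 - (i:ℝ)) ×ˢ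
            Set.Ico (-(j:ℝ)) (1 - (j:ℝ))).indicator φ p :=
        fun i => (integral_finset_sum _ (fun j _ =>
          hφint.indicator (measurableSet_Ico.prod measurableSet_Ico))).symm
      refine Eq.trans (Finset.sum_congr rfl fun i _ => st1 i) ?_
      refine Eq.trans (integral_finset_sum _ (fun i _ => integrable_finset_sum _ (fun j _ =>
          hφint.indicator (measurableSet_Ico.prod measurableSet_Ico)))).symm ?_
      exact integral_congr_ae (Filter.Eventually.of_forall tile2)
    have e6 : ∫ p, (Set.Ico (0:ℝ) 4 ×ˢ Set.Ico (0:ℝ) 4).indicator φ p = 1 := by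
      rw [integral_indicator (measurableSet_Ico.prod measurableSet_Ico)]
      exact hbig
    rw [e1, e2, e3, e4, e5, e6]
  intro x y
  exact (hconst x y).trans hval
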